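/- Let U ∈ ℝ, μ > 0, D > 0, L > 0. Let φ and ψ be twice continuously differentiable functions on ℝ × [0,∞) with compact support, let w be four times continuously differentiable and v twice continuously differentiable on [0,L], and assume the boundary/compatibility conditions: w(0) = w'(0) = 0, v(0) = v'(0) = 0, w''(L) = w'''(L) = 0, ψ(x,0) = 0 for x ∉ [0,L], and ∂_zφ(x,0) = v(x) for x ∈ (0,L). Define the components of 𝔸y by 𝔸₁ = −U∂ₓφ + ψ, 𝔸₂ = Δφ − μφ − U∂ₓψ, 𝔸₃ = v, 𝔸₄ = −D w'''' + ψ(·,0) on (0,L), and define the inner product ⟨(a₁,a₂,a₃,a₄), (φ,ψ,w,v)⟩_Y = ∫_{ℝ×(0,∞)} ( ∇a₁·∇φ + μ a₁ φ + a₂ ψ ) dx dz + D ∫₀^L a₃'' w'' dx + ∫₀^L a₄ v dx. Then ⟨𝔸y, y⟩_Y = 0, i.e. ∫_{ℝ×(0,∞)} ( ∇(−U∂ₓφ + ψ)·∇φ + μ(−U∂ₓφ + ψ)φ + (Δφ − μφ − U∂ₓψ)ψ ) dx dz + D ∫₀^L v'' w'' dx + ∫₀^L ( −D w'''' + ψ(x,0)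 ) v dx = 0. -/

import Mathlib

open MeasureTheory Real Set intervalIntegral

/-- The open upper half-plane `ℝ²₊ = ℝ × (0,∞)`, as a subset of `ℝ × ℝ`. -/
def upperHalfPlane2 : Set (ℝ × ℝ) := {p : ℝ × ℝ | 0 < p.2}

/-- The partial derivative in the first (horizontal) variable of `f : ℝ × ℝ → ℝ`. -/
noncomputable def pX (f : ℝ × ℝ → ℝ) : ℝ × ℝ → ℝ := fun p => deriv (fun x => f (x, p.2)) p.1

/-- The partial derivative in the second (vertical) variable of `f : ℝ × ℝ → ℝ`. -/
noncomputable def pZ (f : ℝ × ℝ → ℝ) : ℝ × ℝ → ℝ := fun p => deriv (fun z => f (p.1, z)) p.2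


lemma sectX_diff {f : ℝ × ℝ → ℝ} (hf : Differentiable ℝ f) (z : ℝ) :
    Differentiable ℝ (fun x => f (x, z)) :=
  hf.comp (differentiable_id.prodMk (differentiable_const _))

lemma sectZ_diff {f : ℝ × ℝ → ℝ} (hf : Differentiable ℝ f) (x : ℝ) :
    Differentiable ℝ (fun z => f (x, z)) :=
  hf.comp ((differentiable_const _).prodMk differentiable_id)

lemma hasDerivAt_pX {f : ℝ × ℝ → ℝ} (hf : Differentiable ℝ f) (p : ℝ × ℝ) :
    HasDerivAt (fun x => f (x, p.2)) (pX f p) p.1 :=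
  (sectX_diff hf p.2 p.1).hasDerivAt

lemma hasDerivAt_pZ {f : ℝ × ℝ → ℝ} (hf : Differentiable ℝ f) (p : ℝ × ℝ) :
    HasDerivAt (fun z => f (p.1, z)) (pZ f p) p.2 :=
  (sectZ_diff hf p.1 p.2).hasDerivAt

lemma pX_eq_fderiv {f : ℝ × ℝ → ℝ} (hf : Differentiable ℝ f) (p : ℝ × ℝ) :
    pX f p = fderiv ℝ f p (1, 0) := by
  have h : HasDerivAt (fun x => f (x, p.2)) (fderiv ℝ f p ((1:ℝ), (0:ℝ))) p.1 := by
    have h2 : HasDerivAt (fun x : ℝ => (x, p.2)) ((1:ℝ), (0:ℝ)) p.1 :=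
      (hasDerivAt_id p.1).prodMk (hasDerivAt_const p.1 p.2)
    have h3 := ((hf p).hasFDerivAt).comp_hasDerivAt p.1 (by simpa using h2)
    exact h3
  exact ((hasDerivAt_pX hf p).unique h)

lemma pZ_eq_fderiv {f : ℝ × ℝ → ℝ} (hf : Differentiable ℝ f) (p : ℝ × ℝ) :
    pZ f p = fderiv ℝ f p (0, 1) := by
  have h2 : HasDerivAt (fun z : ℝ => (p.1, z)) ((0:ℝ), (1:ℝ)) p.2 :=
    (hasDerivAt_const p.2 p.1).prodMk (hasDerivAt_id p.2)
  have h3 := ((hf p).hasFDerivAt).comp_hasDerivAt p.2 (by simpa using h2)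
  exact ((hasDerivAt_pZ hf p).unique h3)

lemma contDiff_pX {f : ℝ × ℝ → ℝ} {n : ℕ∞} (hf : ContDiff ℝ (n + 1) f) :
    ContDiff ℝ n (pX f) := by
  have hd : Differentiable ℝ f := hf.differentiable (by simp)
  have : pX f = fun p => fderiv ℝ f p (1, 0) := funext (pX_eq_fderiv hd)
  rw [this]
  exact (hf.fderiv_right le_rfl).clm_apply contDiff_const

lemma contDiff_pZ {f : ℝ × ℝ → ℝ} {n : ℕ∞} (hf : ContDiff ℝ (n + 1) f) :
    ContDiff ℝ n (pZ f) := by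
  have hd : Differentiable ℝ f := hf.differentiable (by simp)
  have : pZ f = fun p => fderiv ℝ f p (0, 1) := funext (pZ_eq_fderiv hd)
  rw [this]
  exact (hf.fderiv_right le_rfl).clm_apply contDiff_const

lemma schwarz {f : ℝ × ℝ → ℝ} (hf : ContDiff ℝ 2 f) (p : ℝ × ℝ) :
    pX (pZ f) p = pZ (pX f) p := by
  have hd : Differentiable ℝ f := hf.differentiable two_ne_zero
  have hd1 : ContDiff ℝ 1 (fderiv ℝ f) := hf.fderiv_right le_rfl
  have hdX : Differentiable ℝ (pX f) := (contDiff_pX (n := 1) (by norm_num [hf])).differentiable (by simp)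
  have hdZ : Differentiable ℝ (pZ f) := (contDiff_pZ (n := 1) (by norm_num [hf])).differentiable (by simp)
  have hXe : pX f = fun q => fderiv ℝ f q (1, 0) := funext (pX_eq_fderiv hd)
  have hZe : pZ f = fun q => fderiv ℝ f q (0, 1) := funext (pZ_eq_fderiv hd)
  have h1 : pX (pZ f) p = fderiv ℝ (fderiv ℝ f) p (1, 0) (0, 1) := by
    rw [pX_eq_fderiv hdZ p, hZe]
    rw [fderiv_clm_apply (hd1.differentiable one_ne_zero p) (differentiableAt_const _)]
    simp
  have h2 : pZ (pX f) p = fderiv ℝ (fderiv ℝ f) p (0, 1) (1, 0) := by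
    rw [pZ_eq_fderiv hdX p, hXe]
    rw [fderiv_clm_apply (hd1.differentiable one_ne_zero p) (differentiableAt_const _)]
    simp
  rw [h1, h2]
  exact second_derivative_symmetric (fun y => (hd y).hasFDerivAt)
    ((hd1.differentiable one_ne_zero p).hasFDerivAt) _ _

lemma hcs_pX {f : ℝ × ℝ → ℝ} (hf : Differentiable ℝ f) (hs : HasCompactSupport f) :
    HasCompactSupport (pX f) := by
  have : pX f = (fun L : (ℝ × ℝ) →L[ℝ] ℝ => L (1, 0)) ∘ fderiv ℝ f :=
    funext (fun p => pX_eq_fderiv hf p)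
  rw [this]
  exact (hs.fderiv ℝ).comp_left (by simp)

lemma hcs_pZ {f : ℝ × ℝ → ℝ} (hf : Differentiable ℝ f) (hs : HasCompactSupport f) :
    HasCompactSupport (pZ f) := by
  have : pZ f = (fun L : (ℝ × ℝ) →L[ℝ] ℝ => L (0, 1)) ∘ fderiv ℝ f :=
    funext (fun p => pZ_eq_fderiv hf p)
  rw [this]
  exact (hs.fderiv ℝ).comp_left (by simp)

lemma sect_contDiff {F : ℝ × ℝ → ℝ} {n : ℕ∞} (hF : ContDiff ℝ n F) (z : ℝ) :
    ContDiff ℝ n (fun x => F (x, z)) :=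
  hF.comp (contDiff_id.prodMk contDiff_const)

lemma sect_contDiff' {F : ℝ × ℝ → ℝ} {n : ℕ∞} (hF : ContDiff ℝ n F) (x : ℝ) :
    ContDiff ℝ n (fun z => F (x, z)) :=
  hF.comp (contDiff_const.prodMk contDiff_id)

lemma sect_cs {F : ℝ × ℝ → ℝ} (hs : HasCompactSupport F) (z : ℝ) :
    HasCompactSupport (fun x => F (x, z)) := by
  apply HasCompactSupport.intro (hs.image continuous_fst)
  intro x hx
  by_contra h
  exact hx ⟨(x, z), subset_closure h, rfl⟩

lemma sect_cs' {F : ℝ × ℝ → ℝ} (hs : HasCompactSupport F) (x : ℝ) :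
    HasCompactSupport (fun z => F (x, z)) := by
  apply HasCompactSupport.intro (hs.image continuous_snd)
  intro z hz
  by_contra h
  exact hz ⟨(x, z), subset_closure h, rfl⟩

lemma uhp_eq : upperHalfPlane2 = (univ : Set ℝ) ×ˢ Ioi (0:ℝ) := by
  ext p; simp [upperHalfPlane2, Set.mem_prod]

lemma flux_X {F : ℝ × ℝ → ℝ} (hF : ContDiff ℝ 1 F) (hFs : HasCompactSupport F)
    (hcont : Continuous (pX F)) : ∫ q in upperHalfPlane2, pX F q = 0 := by
  have hd : Differentiable ℝ F := hF.differentiable one_ne_zero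
  have hint : Integrable (pX F) := hcont.integrable_of_hasCompactSupport (hcs_pX hd hFs)
  rw [uhp_eq, MeasureTheory.Measure.volume_eq_prod, setIntegral_prod _ (hint.integrableOn)]
  rw [Measure.restrict_univ]
  have hswap : ∫ x : ℝ, ∫ z in Ioi (0:ℝ), pX F (x, z) = ∫ z in Ioi (0:ℝ), ∫ x : ℝ, pX F (x, z) := by
    apply integral_integral_swap
    have : (volume : Measure ℝ).prod (volume.restrict (Ioi (0:ℝ)))
        = ((volume : Measure ℝ).prod volume).restrict (univ ×ˢ Ioi (0:ℝ)) := by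
      rw [← Measure.prod_restrict, Measure.restrict_univ]
    rw [this]
    exact ((MeasureTheory.Measure.volume_eq_prod ℝ ℝ ▸ hint).restrict)
  rw [hswap]
  have hin : ∀ z : ℝ, ∫ x : ℝ, pX F (x, z) = 0 := by
    intro z
    have h1 : ContDiff ℝ 1 (fun x => F (x, z)) := sect_contDiff hF z
    have h2 : HasCompactSupport (fun x => F (x, z)) := sect_cs hFs z
    have hIic := h2.integral_Iic_deriv_eq h1 0
    have hIoi := h2.integral_Ioi_deriv_eq h1 0
    have : ∫ x : ℝ, pX F (x, z) = ∫ x : ℝ, deriv (fun x => F (x, z)) x := rfl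
    rw [this, ← integral_Iic_add_Ioi ?_ ?_, hIic, hIoi]
    · ring
    · exact ((h1.continuous_deriv le_rfl).integrable_of_hasCompactSupport h2.deriv).integrableOn
    · exact ((h1.continuous_deriv le_rfl).integrable_of_hasCompactSupport h2.deriv).integrableOn
  simp [hin]

lemma flux_Z {G : ℝ × ℝ → ℝ} (hG : ContDiff ℝ 1 G) (hGs : HasCompactSupport G)
    (hcont : Continuous (pZ G)) :
    ∫ q in upperHalfPlane2, pZ G q = - ∫ x : ℝ, G (x, 0) := by
  have hd : Differentiable ℝ G := hG.differentiable one_ne_zero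
  have hint : Integrable (pZ G) := hcont.integrable_of_hasCompactSupport (hcs_pZ hd hGs)
  rw [uhp_eq, MeasureTheory.Measure.volume_eq_prod, setIntegral_prod _ (hint.integrableOn)]
  rw [Measure.restrict_univ]
  have hin : ∀ x : ℝ, ∫ z in Ioi (0:ℝ), pZ G (x, z) = -(G (x, 0)) := by
    intro x
    have h1 : ContDiff ℝ 1 (fun z => G (x, z)) := sect_contDiff' hG x
    have h2 : HasCompactSupport (fun z => G (x, z)) := sect_cs' hGs x
    exact h2.integral_Ioi_deriv_eq h1 0
  calc ∫ x : ℝ, ∫ z in Ioi (0:ℝ), pZ G (x, z) = ∫ x : ℝ, -(G (x, 0)) := by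
        exact integral_congr_ae (Filter.Eventually.of_forall hin)
    _ = - ∫ x : ℝ, G (x, 0) := integral_neg _
lemma deriv_contDiff {f : ℝ → ℝ} {n : ℕ∞} (hf : ContDiff ℝ (n+1) f) :
    ContDiff ℝ n (deriv f) := by
  have := contDiff_succ_iff_deriv.mp (by exact_mod_cast hf :
    ContDiff ℝ ((n : WithTop ℕ∞) + 1) f)
  exact this.2.2

lemma beam_ibp {L : ℝ} {w v : ℝ → ℝ} (hw : ContDiff ℝ 4 w) (hv : ContDiff ℝ 2 v)
    (hv0 : v 0 = 0) (hv0' : deriv v 0 = 0)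
    (hwL : deriv (deriv w) L = 0) (hwL' : deriv (deriv (deriv w)) L = 0) :
    ∫ x in (0:ℝ)..L, v x * deriv (deriv (deriv (deriv w))) x
      = ∫ x in (0:ℝ)..L, deriv (deriv v) x * deriv (deriv w) x := by
  have hw1 : ContDiff ℝ 3 (deriv w) := deriv_contDiff (by norm_num; exact hw : ContDiff ℝ ((3:ℕ∞)+1) w)
  have hw2 : ContDiff ℝ 2 (deriv (deriv w)) := deriv_contDiff (by norm_num; exact hw1 : ContDiff ℝ ((2:ℕ∞)+1) (deriv w))
  have hw3 : ContDiff ℝ 1 (deriv (deriv (deriv w))) := deriv_contDiff (by norm_num; exact hw2 : ContDiff ℝ ((1:ℕ∞)+1) (deriv (deriv w)))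
  have hw4 : Continuous (deriv (deriv (deriv (deriv w)))) := (hw3.continuous_deriv le_rfl)
  have hv1 : ContDiff ℝ 1 (deriv v) := deriv_contDiff (by norm_num; exact hv : ContDiff ℝ ((1:ℕ∞)+1) v)
  have hv2 : Continuous (deriv (deriv v)) := hv1.continuous_deriv le_rfl
  have ibp1 : ∫ x in (0:ℝ)..L, v x * deriv (deriv (deriv (deriv w))) x
      = v L * deriv (deriv (deriv w)) L - v 0 * deriv (deriv (deriv w)) 0
        - ∫ x in (0:ℝ)..L, deriv v x * deriv (deriv (deriv w)) x := by
    apply intervalIntegral.integral_mul_deriv_eq_deriv_mul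
    · exact fun x _ => (hv.differentiable (by norm_num) x).hasDerivAt
    · exact fun x _ => (hw3.differentiable one_ne_zero x).hasDerivAt
    · exact ((hv1.continuous)).intervalIntegrable _ _
    · exact hw4.intervalIntegrable _ _
  have ibp2 : ∫ x in (0:ℝ)..L, deriv v x * deriv (deriv (deriv w)) x
      = deriv v L * deriv (deriv w) L - deriv v 0 * deriv (deriv w) 0
        - ∫ x in (0:ℝ)..L, deriv (deriv v) x * deriv (deriv w) x := by
    apply intervalIntegral.integral_mul_deriv_eq_deriv_mul
    · exact fun x _ => (hv1.differentiable one_ne_zero x).hasDerivAt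
    · exact fun x _ => (hw2.differentiable (by norm_num) x).hasDerivAt
    · exact hv2.intervalIntegrable _ _
    · exact (hw3.continuous).intervalIntegrable _ _
  rw [ibp1, ibp2, hv0, hv0', hwL, hwL']
  ring

theorem statement12
    (U μ D L : ℝ) (hμ : 0 < μ) (hD : 0 < D) (hL : 0 < L)
    (φ ψ : ℝ × ℝ → ℝ)
    (hφ : ContDiff ℝ 2 φ) (hψ : ContDiff ℝ 2 ψ)
    (hφsupp : HasCompactSupport φ) (hψsupp : HasCompactSupport ψ)
    (w v : ℝ → ℝ) (hw : ContDiff ℝ 4 w) (hv : ContDiff ℝ 2 v)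
    (hw0 : w 0 = 0) (hw0' : deriv w 0 = 0)
    (hv0 : v 0 = 0) (hv0' : deriv v 0 = 0)
    (hwL : deriv (deriv w) L = 0) (hwL' : deriv (deriv (deriv w)) L = 0)
    (hKJC : ∀ x : ℝ, x ∉ Icc (0:ℝ) L → ψ (x, 0) = 0)
    (hNeumann : ∀ x ∈ Ioo (0:ℝ) L, pZ φ (x, 0) = v x)
    (A₁ A₂ : ℝ × ℝ → ℝ)
    (hA₁ : ∀ q, A₁ q = -U * pX φ q + ψ q)
    (hA₂ : ∀ q, A₂ q = (pX (pX φ) q + pZ (pZ φ) q) - μ * φ q - U * pX ψ q) :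
    (∫ q in upperHalfPlane2,
        (pX A₁ q * pX φ q + pZ A₁ q * pZ φ q + μ * A₁ q * φ q + A₂ q * ψ q))
      + D * (∫ x in (0:ℝ)..L, deriv (deriv v) x * deriv (deriv w) x)
      + (∫ x in (0:ℝ)..L, (-(D * deriv (deriv (deriv (deriv w))) x) + ψ (x, 0)) * v x)
      = 0 := by
  -- basic differentiability
  have hφd : Differentiable ℝ φ := hφ.differentiable two_ne_zero
  have hψd : Differentiable ℝ ψ := hψ.differentiable two_ne_zero
  have hφ1 : ContDiff ℝ 1 φ := hφ.of_le (by norm_num)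
  have hψ1 : ContDiff ℝ 1 ψ := hψ.of_le (by norm_num)
  have hφ1X : ContDiff ℝ 1 (pX φ) := contDiff_pX (by norm_num; exact hφ : ContDiff ℝ ((1:ℕ∞)+1) φ)
  have hφ1Z : ContDiff ℝ 1 (pZ φ) := contDiff_pZ (by norm_num; exact hφ : ContDiff ℝ ((1:ℕ∞)+1) φ)
  have hψ1X : ContDiff ℝ 1 (pX ψ) := contDiff_pX (by norm_num; exact hψ : ContDiff ℝ ((1:ℕ∞)+1) ψ)
  have hψ1Z : ContDiff ℝ 1 (pZ ψ) := contDiff_pZ (by norm_num; exact hψ : ContDiff ℝ ((1:ℕ∞)+1) ψ)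
  have hφdX : Differentiable ℝ (pX φ) := hφ1X.differentiable one_ne_zero
  have hφdZ : Differentiable ℝ (pZ φ) := hφ1Z.differentiable one_ne_zero
  -- continuity of first and second partials
  have cφ : Continuous φ := hφ.continuous
  have cψ : Continuous ψ := hψ.continuous
  have cφX : Continuous (pX φ) := hφ1X.continuous
  have cφZ : Continuous (pZ φ) := hφ1Z.continuous
  have cψX : Continuous (pX ψ) := hψ1X.continuous
  have cψZ : Continuous (pZ ψ) := hψ1Z.continuous
  have cXX : Continuous (pX (pX φ)) :=
    (contDiff_pX (by norm_num; exact hφ1X : ContDiff ℝ ((0:ℕ∞)+1) (pX φ))).continuous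
  have cXZ : Continuous (pX (pZ φ)) :=
    (contDiff_pX (by norm_num; exact hφ1Z : ContDiff ℝ ((0:ℕ∞)+1) (pZ φ))).continuous
  have cZZ : Continuous (pZ (pZ φ)) :=
    (contDiff_pZ (by norm_num; exact hφ1Z : ContDiff ℝ ((0:ℕ∞)+1) (pZ φ))).continuous
  have cZX : Continuous (pZ (pX φ)) :=
    (contDiff_pZ (by norm_num; exact hφ1X : ContDiff ℝ ((0:ℕ∞)+1) (pX φ))).continuous
  -- the flux potentials
  set F : ℝ × ℝ → ℝ := fun q =>
    (-U/2) * (pX φ q * pX φ q + pZ φ q * pZ φ q + μ * (φ q * φ q) + ψ q * ψ q)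
      + ψ q * pX φ q with hFdef
  set G : ℝ × ℝ → ℝ := fun q => ψ q * pZ φ q with hGdef
  have hFc1 : ContDiff ℝ 1 F :=
    (contDiff_const.mul ((((hφ1X.mul hφ1X).add (hφ1Z.mul hφ1Z)).add
      (contDiff_const.mul (hφ1.mul hφ1))).add (hψ1.mul hψ1))).add (hψ1.mul hφ1X)
  have hGc1 : ContDiff ℝ 1 G := hψ1.mul hφ1Z
  -- compact supports
  have hKcs : IsCompact (tsupport φ ∪ tsupport ψ) := hφsupp.union hψsupp
  have hvan : ∀ q : ℝ × ℝ, q ∉ tsupport φ ∪ tsupport ψ →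
      φ q = 0 ∧ ψ q = 0 ∧ pX φ q = 0 ∧ pZ φ q = 0 := by
    intro q hq
    have h1 : φ q = 0 := image_eq_zero_of_notMem_tsupport (fun h => hq (Or.inl h))
    have h2 : ψ q = 0 := image_eq_zero_of_notMem_tsupport (fun h => hq (Or.inr h))
    have hfd : fderiv ℝ φ q = 0 := by
      by_contra h
      exact hq (Or.inl (support_fderiv_subset ℝ (Function.mem_support.mpr h)))
    have h3 : pX φ q = 0 := by rw [pX_eq_fderiv hφd, hfd]; simp
    have h4 : pZ φ q = 0 := by rw [pZ_eq_fderiv hφd, hfd]; simp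
    exact ⟨h1, h2, h3, h4⟩
  have hFs : HasCompactSupport F := by
    apply HasCompactSupport.intro hKcs
    intro q hq
    obtain ⟨h1, h2, h3, h4⟩ := hvan q hq
    simp [hFdef, h1, h2, h3, h4]
  have hGs : HasCompactSupport G := by
    apply HasCompactSupport.intro hKcs
    intro q hq
    obtain ⟨h1, h2, h3, h4⟩ := hvan q hq
    simp [hGdef, h2, h4]
  -- explicit formulas for pX F and pZ G
  have hFX : ∀ p : ℝ × ℝ, pX F p =
      (-U/2) * ((pX (pX φ) p * pX φ p + pX φ p * pX (pX φ) p
          + (pX (pZ φ) p * pZ φ p + pZ φ p * pX (pZ φ) p)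
          + μ * (pX φ p * φ p + φ p * pX φ p))
          + (pX ψ p * ψ p + ψ p * pX ψ p))
        + (pX ψ p * pX φ p + ψ p * pX (pX φ) p) := by
    intro p
    have hA := hasDerivAt_pX hφdX p
    have hB := hasDerivAt_pX hφdZ p
    have h1 := hasDerivAt_pX hφd p
    have hP := hasDerivAt_pX hψd p
    have hcomb := ((((hA.mul hA).add (hB.mul hB)).add
        ((h1.mul h1).const_mul μ)).add (hP.mul hP)).const_mul (-U/2) |>.add (hP.mul hA)
    exact hcomb.deriv
  have hGZ : ∀ p : ℝ × ℝ, pZ G p = pZ ψ p * pZ φ p + ψ p * pZ (pZ φ) p := by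
    intro p
    exact ((hasDerivAt_pZ hψd p).mul (hasDerivAt_pZ hφdZ p)).deriv
  -- continuity and integrability of the flux derivatives
  have hFXfun : pX F = fun p =>
      (-U/2) * ((pX (pX φ) p * pX φ p + pX φ p * pX (pX φ) p
          + (pX (pZ φ) p * pZ φ p + pZ φ p * pX (pZ φ) p)
          + μ * (pX φ p * φ p + φ p * pX φ p))
          + (pX ψ p * ψ p + ψ p * pX ψ p))
        + (pX ψ p * pX φ p + ψ p * pX (pX φ) p) := funext hFX
  have hGZfun : pZ G = fun p => pZ ψ p * pZ φ p + ψ p * pZ (pZ φ) p := funext hGZ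
  have hFXcont : Continuous (pX F) := by rw [hFXfun]; fun_prop
  have hGZcont : Continuous (pZ G) := by rw [hGZfun]; fun_prop
  -- the integrand equals pX F + pZ G
  have hA1X : ∀ p : ℝ × ℝ, pX A₁ p = -U * pX (pX φ) p + pX ψ p := by
    intro p
    have : A₁ = fun q => -U * pX φ q + ψ q := funext hA₁
    rw [this]
    exact (((hasDerivAt_pX hφdX p).const_mul (-U)).add (hasDerivAt_pX hψd p)).deriv
  have hA1Z : ∀ p : ℝ × ℝ, pZ A₁ p = -U * pZ (pX φ) p + pZ ψ p := by
    intro p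
    have : A₁ = fun q => -U * pX φ q + ψ q := funext hA₁
    rw [this]
    exact (((hasDerivAt_pZ hφdX p).const_mul (-U)).add (hasDerivAt_pZ hψd p)).deriv
  have hI : ∀ p : ℝ × ℝ,
      pX A₁ p * pX φ p + pZ A₁ p * pZ φ p + μ * A₁ p * φ p + A₂ p * ψ p
        = pX F p + pZ G p := by
    intro p
    rw [hA1X p, hA1Z p, hA₁ p, hA₂ p, hFX p, hGZ p, schwarz hφ p]
    ring
  -- the flow integral
  have hFint : IntegrableOn (pX F) upperHalfPlane2 :=
    (hFXcont.integrable_of_hasCompactSupport (hcs_pX (hFc1.differentiable one_ne_zero) hFs)).integrableOn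
  have hGint : IntegrableOn (pZ G) upperHalfPlane2 :=
    (hGZcont.integrable_of_hasCompactSupport (hcs_pZ (hGc1.differentiable one_ne_zero) hGs)).integrableOn
  have hMain : (∫ q in upperHalfPlane2,
      (pX A₁ q * pX φ q + pZ A₁ q * pZ φ q + μ * A₁ q * φ q + A₂ q * ψ q))
      = - ∫ x : ℝ, G (x, 0) := by
    rw [integral_congr_ae (Filter.Eventually.of_forall hI), integral_add hFint hGint,
      flux_X hFc1 hFs hFXcont, flux_Z hGc1 hGs hGZcont]
    ring
  -- identify the boundary integral
  have hbd : (∫ x : ℝ, G (x, 0)) = ∫ x in (0:ℝ)..L, ψ (x, 0) * v x := by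
    have hzero : ∀ x : ℝ, x ∉ Icc (0:ℝ) L → G (x, 0) = 0 := by
      intro x hx
      simp [hGdef, hKJC x hx]
    have e1 : (∫ x : ℝ, G (x, 0)) = ∫ x in Icc (0:ℝ) L, G (x, 0) :=
      (setIntegral_eq_integral_of_forall_compl_eq_zero hzero).symm
    have hne : ∀ᵐ x : ℝ, x ≠ L := by
      rw [MeasureTheory.ae_iff]
      simpa using Real.volume_singleton
    have e3 : (∫ x in Ioc (0:ℝ) L, G (x, 0)) = ∫ x in Ioc (0:ℝ) L, ψ (x, 0) * v x := by
      apply setIntegral_congr_ae measurableSet_Ioc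
      filter_upwards [hne] with x hx hmem
      have hxo : x ∈ Ioo (0:ℝ) L := ⟨hmem.1, lt_of_le_of_ne hmem.2 hx⟩
      simp [hGdef, hNeumann x hxo]
    rw [e1, integral_Icc_eq_integral_Ioc, e3, intervalIntegral.integral_of_le hL.le]
  -- the beam integrals
  have hw1 : ContDiff ℝ 3 (deriv w) := deriv_contDiff (by norm_num; exact hw : ContDiff ℝ ((3:ℕ∞)+1) w)
  have hw2 : ContDiff ℝ 2 (deriv (deriv w)) := deriv_contDiff (by norm_num; exact hw1 : ContDiff ℝ ((2:ℕ∞)+1) (deriv w))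
  have hw3 : ContDiff ℝ 1 (deriv (deriv (deriv w))) := deriv_contDiff (by norm_num; exact hw2 : ContDiff ℝ ((1:ℕ∞)+1) (deriv (deriv w)))
  have hw4c : Continuous (deriv (deriv (deriv (deriv w)))) := hw3.continuous_deriv le_rfl
  have hThird : (∫ x in (0:ℝ)..L, (-(D * deriv (deriv (deriv (deriv w))) x) + ψ (x, 0)) * v x)
      = (∫ x in (0:ℝ)..L, ψ (x, 0) * v x)
        - D * ∫ x in (0:ℝ)..L, deriv (deriv v) x * deriv (deriv w) x := by
    have hre : ∀ x : ℝ, (-(D * deriv (deriv (deriv (deriv w))) x) + ψ (x, 0)) * v x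
        = ψ (x, 0) * v x - D * (v x * deriv (deriv (deriv (deriv w))) x) := by
      intro x; ring
    have hψ0c : Continuous (fun x : ℝ => ψ (x, 0)) := cψ.comp (continuous_id.prodMk continuous_const)
    have hint1 : IntervalIntegrable (fun x : ℝ => ψ (x, 0) * v x) volume 0 L :=
      (hψ0c.mul hv.continuous).intervalIntegrable _ _
    have hint2 : IntervalIntegrable (fun x : ℝ => D * (v x * deriv (deriv (deriv (deriv w))) x)) volume 0 L :=
      (continuous_const.mul (hv.continuous.mul hw4c)).intervalIntegrable _ _
    simp only [hre]
    rw [intervalIntegral.integral_sub hint1 hint2, intervalIntegral.integral_const_mul,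
      beam_ibp hw hv hv0 hv0' hwL hwL']
  rw [hMain, hbd, hThird]
  ring
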